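/- Let C be an (n,k,ℓ) MDS array code over F_q in systematic form with block matrix A (r = n−k, 2 ≤ h ≤ r, β = hℓ/r an integer), and let F_1 and F_2 be two h-subsets of the systematic nodes, each admitting an (h, n−h) optimal repair scheme (with repair matrices S_{j→F_1} and S_{j→F_2} respectively). Then rank( S_{P→F_2}·A(:,F_1) ) ≤ (h − |F_1 ∩ F_2|)·hℓ/r + |F_1 ∩ F_2|·ℓ, where S_{P→F_2} = diag(S_{p_1→F_2},…,S_{p_r→F_2}). -/

import Mathlib

open Matrix

noncomputable section

variable {𝔽 : Type*} [Field 𝔽]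

/-- Every square block submatrix of the `r × k` block matrix `A` (with `ℓ × ℓ` blocks) is
invertible; this is the MDS property of the systematic-form array code determined by `A`. -/
def BlockInvertible {r k ℓ : ℕ} (A : Fin r → Fin k → Matrix (Fin ℓ) (Fin ℓ) 𝔽) : Prop :=
  ∀ (I : Finset (Fin r)) (J : Finset (Fin k)), I.card = J.card →
    Function.Bijective
      ((Matrix.of fun p : ↥I × Fin ℓ => fun q : ↥J × Fin ℓ =>
        A p.1.1 q.1.1 p.2 q.2).mulVecLin)

/-- The value of the codeword parameterized by the systematic data `x` at a node:
nodes are indexed by `Fin k ⊕ Fin r` (systematic nodes `u_j = Sum.inl j`,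
parity nodes `p_i = Sum.inr i`), and `C_{p_i} = ∑ j, A_{p_i,u_j} x_j`. -/
def nodeVal {r k ℓ : ℕ} (A : Fin r → Fin k → Matrix (Fin ℓ) (Fin ℓ) 𝔽)
    (x : Fin k → Fin ℓ → 𝔽) : Fin k ⊕ Fin r → Fin ℓ → 𝔽
  | Sum.inl j => x j
  | Sum.inr i => ∑ j, (A i j).mulVec (x j)

/-- The helper nodes for a failed set `F` of systematic nodes: all `n - h` other nodes. -/
def helperSet {r k : ℕ} (F : Finset (Fin k)) : Finset (Fin k ⊕ Fin r) :=
  (F.map ⟨Sum.inl, Sum.inl_injective⟩)ᶜ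

/-- An `(h, n-h)` optimal repair scheme for the failed set `F` of systematic nodes of the
systematic-form code determined by `A`: each helper node `j` sends `S j *ᵥ C_j`, and a
linear map `g` (the matrix `M_F`) reconstructs the stacked failed symbols. -/
def SysRepairScheme {r k ℓ β : ℕ} (A : Fin r → Fin k → Matrix (Fin ℓ) (Fin ℓ) 𝔽)
    (F : Finset (Fin k)) (S : Fin k ⊕ Fin r → Matrix (Fin β) (Fin ℓ) 𝔽) : Prop :=
  ∃ g : (↥(helperSet (r := r) F) → Fin β → 𝔽) →ₗ[𝔽] (↥F → Fin ℓ → 𝔽),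
    ∀ x : Fin k → Fin ℓ → 𝔽, ∀ i : ↥F,
      x i.1 = g (fun j => (S j.1).mulVec (nodeVal A x j.1)) i

/-- The row space of a matrix. -/
def rowSpace {m n : Type*} (S : Matrix m n 𝔽) : Submodule 𝔽 (n → 𝔽) :=
  Submodule.span 𝔽 (Set.range fun i : m => fun j : n => S i j)

/-! ### Auxiliary development -/

section aux
variable {r k ℓ β : ℕ}

lemma inr_mem_helperSet (F : Finset (Fin k)) (i : Fin r) :
    Sum.inr i ∈ helperSet (r := r) F := by
  simp [helperSet]

lemma inl_mem_helperSet (F : Finset (Fin k)) (m : Fin k) :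
    Sum.inl m ∈ helperSet (r := r) F ↔ m ∉ F := by
  simp [helperSet]

/-- the curry linear equivalence -/
def curryLE (ι κ : Type*) : (ι × κ → 𝔽) ≃ₗ[𝔽] (ι → κ → 𝔽) :=
  { Equiv.curry ι κ 𝔽 with
    map_add' := fun _ _ => rfl
    map_smul' := fun _ _ => rfl }

lemma nodeVal_add (A : Fin r → Fin k → Matrix (Fin ℓ) (Fin ℓ) 𝔽) (x y : Fin k → Fin ℓ → 𝔽)
    (t : Fin k ⊕ Fin r) : nodeVal A (x + y) t = nodeVal A x t + nodeVal A y t := by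
  cases t with
  | inl j => rfl
  | inr i =>
    show ∑ j, (A i j).mulVec (x j + y j) = _
    simp [nodeVal, Matrix.mulVec_add, Finset.sum_add_distrib]

lemma nodeVal_smul (A : Fin r → Fin k → Matrix (Fin ℓ) (Fin ℓ) 𝔽) (c : 𝔽)
    (x : Fin k → Fin ℓ → 𝔽) (t : Fin k ⊕ Fin r) :
    nodeVal A (c • x) t = c • nodeVal A x t := by
  cases t with
  | inl j => rfl
  | inr i =>
    show ∑ j, (A i j).mulVec (c • x j) = _
    simp [nodeVal, Matrix.mulVec_smul, Finset.smul_sum]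

variable (A : Fin r → Fin k → Matrix (Fin ℓ) (Fin ℓ) 𝔽)
  (F : Finset (Fin k)) (S : Fin k ⊕ Fin r → Matrix (Fin β) (Fin ℓ) 𝔽)

/-- The message map. -/
def MsgL : (Fin k → Fin ℓ → 𝔽) →ₗ[𝔽] (↥(helperSet (r := r) F) → Fin β → 𝔽) where
  toFun x := fun jh => (S jh.1).mulVec (nodeVal A x jh.1)
  map_add' x y := by funext jh; simp [nodeVal_add, Matrix.mulVec_add]
  map_smul' c x := by funext jh; simp [nodeVal_smul, Matrix.mulVec_smul]

/-- Extension by zero. -/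
def extL : (↥F → Fin ℓ → 𝔽) →ₗ[𝔽] (Fin k → Fin ℓ → 𝔽) where
  toFun y m := if hm : m ∈ F then y ⟨m, hm⟩ else 0
  map_add' y z := by funext m; by_cases hm : m ∈ F <;> simp [hm]
  map_smul' c y := by funext m; by_cases hm : m ∈ F <;> simp [hm]

/-- Selection of parity coordinates. -/
def selL : (↥(helperSet (r := r) F) → Fin β → 𝔽) →ₗ[𝔽] (Fin r → Fin β → 𝔽) where
  toFun z := fun i => z ⟨Sum.inr i, inr_mem_helperSet F i⟩
  map_add' y z := rfl
  map_smul' c y := rfl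

/-- Embedding of parity messages into all helper messages. -/
def EL : (Fin r → Fin β → 𝔽) →ₗ[𝔽] (↥(helperSet (r := r) F) → Fin β → 𝔽) where
  toFun z jh := Sum.elim (fun _ => 0) z jh.1
  map_add' y z := by funext jh; rcases jh with ⟨t, ht⟩; cases t <;> simp
  map_smul' c y := by funext jh; rcases jh with ⟨t, ht⟩; cases t <;> simp

/-- Embedding of a single systematic helper's message. -/
def iotaL (j : Fin k) (hj : j ∉ F) :
    (Fin β → 𝔽) →ₗ[𝔽] (↥(helperSet (r := r) F) → Fin β → 𝔽) where
  toFun w jh := if jh.1 = Sum.inl j then w else 0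
  map_add' y z := by funext jh; by_cases hm : jh.1 = Sum.inl j <;> simp [hm]
  map_smul' c y := by funext jh; by_cases hm : jh.1 = Sum.inl j <;> simp [hm]

/-- The parity message map on data supported on `F`. -/
def PL : (↥F → Fin ℓ → 𝔽) →ₗ[𝔽] (Fin r → Fin β → 𝔽) :=
  selL F ∘ₗ MsgL A F S ∘ₗ extL F

@[simp] lemma MsgL_apply (x : Fin k → Fin ℓ → 𝔽) (jh : ↥(helperSet (r := r) F)) :
    MsgL A F S x jh = (S jh.1).mulVec (nodeVal A x jh.1) := rfl

@[simp] lemma extL_apply (y : ↥F → Fin ℓ → 𝔽) (m : Fin k) :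
    extL (ℓ := ℓ) F y m = if hm : m ∈ F then y ⟨m, hm⟩ else 0 := rfl

@[simp] lemma EL_apply (z : Fin r → Fin β → 𝔽) (jh : ↥(helperSet (r := r) F)) :
    EL F z jh = Sum.elim (fun _ => 0) z jh.1 := rfl

@[simp] lemma iotaL_apply (j : Fin k) (hj : j ∉ F) (w : Fin β → 𝔽)
    (jh : ↥(helperSet (r := r) F)) :
    iotaL F j hj w jh = if jh.1 = Sum.inl j then w else 0 := rfl

lemma msg_ext_eq (y : ↥F → Fin ℓ → 𝔽) :
    MsgL A F S (extL F y) = EL F (PL A F S y) := by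
  funext jh
  obtain ⟨t, ht⟩ := jh
  cases t with
  | inl m =>
    have hm : m ∉ F := (inl_mem_helperSet F m).mp ht
    show (S (Sum.inl m)).mulVec (nodeVal A (extL F y) (Sum.inl m)) = _
    have : nodeVal A (extL F y) (Sum.inl m) = 0 := by
      show (if hm : m ∈ F then y ⟨m, hm⟩ else 0) = 0
      simp [hm]
    simp [this, EL]
  | inr i => rfl

end aux

section key
variable {r k ℓ β : ℕ}
  (A : Fin r → Fin k → Matrix (Fin ℓ) (Fin ℓ) 𝔽)
  (F : Finset (Fin k)) (S : Fin k ⊕ Fin r → Matrix (Fin β) (Fin ℓ) 𝔽)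

lemma rank_block_le_beta (hcard : F.card * ℓ = r * β)
    (hS : SysRepairScheme A F S) (j : Fin k) (hj : j ∉ F) :
    (Matrix.of fun p : Fin r × Fin β => fun q : Fin ℓ =>
      (S (Sum.inr p.1) * A p.1 j) p.2 q).rank ≤ β := by
  classical
  obtain ⟨g, hg⟩ := hS
  have hgMsg : ∀ x : Fin k → Fin ℓ → 𝔽, ∀ i : ↥F, x i.1 = g (MsgL A F S x) i := hg
  have hginv : ∀ y : ↥F → Fin ℓ → 𝔽, g (EL F (PL A F S y)) = y := by
    intro y; funext i
    have h1 := hgMsg (extL F y) i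
    rw [msg_ext_eq] at h1
    rw [← h1, extL_apply]
    simp
  have hinj : Function.Injective (PL A F S) := by
    intro y y' hyy'
    have h2 := hginv y
    rw [hyy', hginv y'] at h2
    exact h2.symm
  have hfr : Module.finrank 𝔽 (↥F → Fin ℓ → 𝔽) = Module.finrank 𝔽 (Fin r → Fin β → 𝔽) := by
    simp only [Module.finrank_pi_fintype, Module.finrank_pi, Finset.sum_const,
      Fintype.card_coe, smul_eq_mul, Fintype.card_fin, Finset.card_univ]
    simpa using hcard
  have hsurj : Function.Surjective (PL A F S) :=
    (LinearMap.injective_iff_surjective_of_finrank_eq_finrank hfr).mp hinj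
  let Pe : (↥F → Fin ℓ → 𝔽) ≃ₗ[𝔽] (Fin r → Fin β → 𝔽) :=
    LinearEquiv.ofBijective (PL A F S) ⟨hinj, hsurj⟩
  have hPeapp : ∀ yy, Pe yy = PL A F S yy := fun yy => rfl
  have hPA : ∀ y : Fin r → Fin β → 𝔽, PL A F S (Pe.symm y) = y := by
    intro y; rw [← hPeapp]; exact Pe.apply_symm_apply y
  have hdecomp : ∀ v : Fin ℓ → 𝔽, MsgL A F S (Pi.single j v) =
      EL F (fun i => (S (Sum.inr i) * A i j).mulVec v)
        + iotaL F j hj ((S (Sum.inl j)).mulVec v) := by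
    intro v
    funext jh
    obtain ⟨t, ht⟩ := jh
    cases t with
    | inl m =>
      have hm : m ∉ F := (inl_mem_helperSet F m).mp ht
      by_cases hmj : m = j
      · subst hmj
        simp [nodeVal]
      · simp [nodeVal, Pi.single_eq_of_ne hmj, Sum.inl.injEq, hmj]
    | inr i =>
      have hnv : nodeVal A (Pi.single j v) (Sum.inr i) = (A i j).mulVec v := by
        simp only [nodeVal]
        rw [Finset.sum_eq_single j]
        · rw [Pi.single_eq_same]
        · intro m _ hm; rw [Pi.single_eq_of_ne hm, Matrix.mulVec_zero]
        · intro hmem; exact absurd (Finset.mem_univ j) hmem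
      simp [hnv, Matrix.mulVec_mulVec]
  have hBL : ∀ v : Fin ℓ → 𝔽,
      (fun i => (S (Sum.inr i) * A i j).mulVec v)
        = (-((PL A F S ∘ₗ g ∘ₗ iotaL F j hj) ∘ₗ (S (Sum.inl j)).mulVecLin)) v := by
    intro v
    have hz : g (MsgL A F S (Pi.single j v)) = 0 := by
      funext i
      have h3 := hgMsg (Pi.single j v) i
      have hne : (i : Fin k) ≠ j := fun hc => hj (by rw [← hc]; exact i.2)
      have h0 : Pi.single (M := fun _ : Fin k => Fin ℓ → 𝔽) j v (i : Fin k) = 0 := by rw [Pi.single_eq_of_ne hne]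
      rw [Pi.zero_apply, ← h3, h0]
    rw [hdecomp v, map_add] at hz
    have h4 : g (EL F (fun i => (S (Sum.inr i) * A i j).mulVec v))
        = Pe.symm (fun i => (S (Sum.inr i) * A i j).mulVec v) := by
      conv_lhs => rw [← hPA (fun i => (S (Sum.inr i) * A i j).mulVec v)]
      exact hginv _
    rw [h4] at hz
    have h5 : Pe.symm (fun i => (S (Sum.inr i) * A i j).mulVec v)
        = -(g (iotaL F j hj ((S (Sum.inl j)).mulVec v))) :=
      eq_neg_of_add_eq_zero_left hz
    have h6 : (fun i => (S (Sum.inr i) * A i j).mulVec v)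
        = -(PL A F S (g (iotaL F j hj ((S (Sum.inl j)).mulVec v)))) := by
      conv_lhs => rw [← hPA (fun i => (S (Sum.inr i) * A i j).mulVec v)]
      rw [h5, map_neg]
    rw [h6]
    simp only [LinearMap.neg_apply, LinearMap.comp_apply, Matrix.mulVecLin_apply]
  have hmv : (Matrix.of fun p : Fin r × Fin β => fun q : Fin ℓ =>
        (S (Sum.inr p.1) * A p.1 j) p.2 q).mulVecLin =
      ((curryLE (Fin r) (Fin β)).symm.toLinearMap : (Fin r → Fin β → 𝔽) →ₗ[𝔽] _) ∘ₗ
        (-((PL A F S ∘ₗ g ∘ₗ iotaL F j hj) ∘ₗ (S (Sum.inl j)).mulVecLin)) := by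
    apply LinearMap.ext; intro v
    funext p
    show ((S (Sum.inr p.1) * A p.1 j).mulVec v) p.2
      = (-((PL A F S ∘ₗ g ∘ₗ iotaL F j hj) ∘ₗ (S (Sum.inl j)).mulVecLin)) v p.1 p.2
    rw [← hBL v]
  rw [Matrix.rank, hmv, LinearMap.range_comp, LinearEquiv.finrank_map_eq,
    LinearMap.range_neg, LinearMap.range_comp]
  refine le_trans (Submodule.finrank_map_le _ _) ?_
  refine le_trans (Submodule.finrank_le _) ?_
  simp [Module.finrank_pi]

end key

section sumlem
variable {M N : Type*} [AddCommGroup M] [Module 𝔽 M] [AddCommGroup N] [Module 𝔽 N]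
  [FiniteDimensional 𝔽 N]

lemma finrank_range_sum_le {ι : Type*} (s : Finset ι) (f : ι → (M →ₗ[𝔽] N)) :
    Module.finrank 𝔽 (LinearMap.range (∑ i ∈ s, f i))
      ≤ ∑ i ∈ s, Module.finrank 𝔽 (LinearMap.range (f i)) := by
  classical
  induction s using Finset.induction with
  | empty =>
    simp
    exact Submodule.finrank_eq_zero.mpr (LinearMap.range_eq_bot.mpr rfl)
  | @insert a s ha ih =>
    rw [Finset.sum_insert ha, Finset.sum_insert ha]
    have hle : LinearMap.range (f a + ∑ i ∈ s, f i)
        ≤ LinearMap.range (f a) ⊔ LinearMap.range (∑ i ∈ s, f i) := by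
      rintro _ ⟨x, rfl⟩
      exact Submodule.add_mem_sup (LinearMap.mem_range_self _ x) (LinearMap.mem_range_self _ x)
    refine le_trans (Submodule.finrank_mono hle) ?_
    refine le_trans (Submodule.finrank_add_le_finrank_add_finrank _ _) ?_
    exact Nat.add_le_add_left ih _

end sumlem

/-- Lemma 2 of the paper, inequality part:
`rank(S_{P→F₂} ⬝ A(:,F₁)) ≤ (h - |F₁ ∩ F₂|)·hℓ/r + |F₁ ∩ F₂|·ℓ`; here `hℓ/r = β`. -/
theorem stmt7 {r k ℓ h β : ℕ} (hh2 : 2 ≤ h) (hhr : h ≤ r) (hβ : h * ℓ = r * β)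
    (A : Fin r → Fin k → Matrix (Fin ℓ) (Fin ℓ) 𝔽) (hA : BlockInvertible A)
    (F₁ F₂ : Finset (Fin k)) (hF₁ : F₁.card = h) (hF₂ : F₂.card = h)
    (S₁ S₂ : Fin k ⊕ Fin r → Matrix (Fin β) (Fin ℓ) 𝔽)
    (hS₁ : SysRepairScheme A F₁ S₁) (hS₂ : SysRepairScheme A F₂ S₂) :
    (Matrix.of fun p : Fin r × Fin β => fun q : ↥F₁ × Fin ℓ =>
        (S₂ (Sum.inr p.1) * A p.1 q.1.1) p.2 q.2).rank
      ≤ (h - (F₁ ∩ F₂).card) * β + (F₁ ∩ F₂).card * ℓ := by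
  classical
  have hdec : (Matrix.of fun p : Fin r × Fin β => fun q : ↥F₁ × Fin ℓ =>
        (S₂ (Sum.inr p.1) * A p.1 q.1.1) p.2 q.2).mulVecLin = ∑ j : ↥F₁,
      ((Matrix.of fun p : Fin r × Fin β => fun q : Fin ℓ =>
        (S₂ (Sum.inr p.1) * A p.1 j.1) p.2 q).mulVecLin ∘ₗ
        LinearMap.funLeft 𝔽 𝔽 (fun q : Fin ℓ => ((j, q) : ↥F₁ × Fin ℓ))) := by
    apply LinearMap.ext; intro u
    funext p
    simp only [LinearMap.sum_apply, LinearMap.coe_comp, Function.comp_apply,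
      Matrix.mulVecLin_apply, LinearMap.funLeft_apply, Matrix.mulVec, dotProduct,
      Matrix.of_apply, Finset.sum_apply]
    rw [Fintype.sum_prod_type]
  rw [Matrix.rank, hdec]
  refine le_trans (finrank_range_sum_le Finset.univ _) ?_
  have hterm : ∀ j : ↥F₁,
      Module.finrank 𝔽 (LinearMap.range
        ((Matrix.of fun p : Fin r × Fin β => fun q : Fin ℓ =>
          (S₂ (Sum.inr p.1) * A p.1 j.1) p.2 q).mulVecLin ∘ₗ
          LinearMap.funLeft 𝔽 𝔽 (fun q : Fin ℓ => ((j, q) : ↥F₁ × Fin ℓ))))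
        ≤ (if (j : Fin k) ∈ F₂ then ℓ else β) := by
    intro j
    refine le_trans (Submodule.finrank_mono (LinearMap.range_comp_le_range _ _)) ?_
    have hrk : Module.finrank 𝔽 (LinearMap.range
        (Matrix.of fun p : Fin r × Fin β => fun q : Fin ℓ =>
          (S₂ (Sum.inr p.1) * A p.1 j.1) p.2 q).mulVecLin)
        = (Matrix.of fun p : Fin r × Fin β => fun q : Fin ℓ =>
          (S₂ (Sum.inr p.1) * A p.1 j.1) p.2 q).rank := rfl
    rw [hrk]
    by_cases hj : (j : Fin k) ∈ F₂
    · simp only [hj, if_true]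
      exact (Matrix.rank_le_card_width _).trans (by simp)
    · simp only [hj, if_false]
      exact rank_block_le_beta A F₂ S₂ (by rw [hF₂]; exact hβ) hS₂ j.1 hj
  refine le_trans (Finset.sum_le_sum fun j _ => hterm j) ?_
  have hsum : ∑ j : ↥F₁, (if (j : Fin k) ∈ F₂ then ℓ else β)
      = (F₁ ∩ F₂).card * ℓ + (F₁ \ F₂).card * β := by
    rw [Finset.univ_eq_attach, Finset.sum_attach F₁ (fun m => if m ∈ F₂ then ℓ else β),
      Finset.sum_ite, Finset.sum_const, Finset.sum_const, Finset.filter_mem_eq_inter,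
      ← Finset.sdiff_eq_filter]
    simp [mul_comm]
  rw [hsum]
  have hcard : (F₁ \ F₂).card = h - (F₁ ∩ F₂).card := by
    have := Finset.card_sdiff_add_card_inter F₁ F₂
    omega
  rw [hcard, add_comm]
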